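/- The roots of the Richelot polynomial [Q,R], where Q(x) = (x−b)(x−b') and R(x) = (x−c)(x−c'), are given explicitly by (c c' − b b' ∓ A)/(c + c' − b − b') with A = √((b−c)(b−c')(b'−c)(b'−c')), provided c + c' ≠ b + b'. -/

import Mathlib

/-- Explicit formula for the roots of the Richelot polynomial `[Q,R]`. -/
theorem richelot_roots_formula (b b' c c' A : ℝ)
    (hA : A ^ 2 = (b - c) * (b - c') * (b' - c) * (b' - c'))
    (hden : c + c' - b - b' ≠ 0)
    (Q R U : ℝ → ℝ)
    (hQ : ∀ x, Q x = (x - b) * (x - b'))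
    (hR : ∀ x, R x = (x - c) * (x - c'))
    (hU : ∀ x, U x = deriv Q x * R x - deriv R x * Q x) :
    U ((c * c' - b * b' - A) / (c + c' - b - b')) = 0 ∧
    U ((c * c' - b * b' + A) / (c + c' - b - b')) = 0 := by
  obtain rfl : Q = fun x => (x - b) * (x - b') := funext hQ
  obtain rfl : R = fun x => (x - c) * (x - c') := funext hR
  have hdQ : ∀ x : ℝ, deriv (fun x => (x - b) * (x - b')) x = (x - b') + (x - b) := by
    intro x
    have : HasDerivAt (fun x => (x - b) * (x - b')) ((x - b') + (x - b)) x := by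
      have h1 : HasDerivAt (fun x : ℝ => x - b) 1 x := (hasDerivAt_id x).sub_const b
      have h2 : HasDerivAt (fun x : ℝ => x - b') 1 x := (hasDerivAt_id x).sub_const b'
      simpa [Pi.mul_def] using h1.mul h2
    exact this.deriv
  have hdR : ∀ x : ℝ, deriv (fun x => (x - c) * (x - c')) x = (x - c') + (x - c) := by
    intro x
    have : HasDerivAt (fun x => (x - c) * (x - c')) ((x - c') + (x - c)) x := by
      have h1 : HasDerivAt (fun x : ℝ => x - c) 1 x := (hasDerivAt_id x).sub_const c
      have h2 : HasDerivAt (fun x : ℝ => x - c') 1 x := (hasDerivAt_id x).sub_const c'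
      simpa [Pi.mul_def] using h1.mul h2
    exact this.deriv
  constructor
  · rw [hU, hdQ, hdR]
    field_simp
    linear_combination -((c + c' - b - b')^2) * hA
  · rw [hU, hdQ, hdR]
    field_simp
    linear_combination -((c + c' - b - b')^2) * hA
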